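/- Let A be a unital C*-algebra, A₀ ⊆ A a dense *-subalgebra, and τ₀ a weight on A which is ε-invariant for δ-unitaries in A₀. Then the semicontinuous regularization τ(a) := sup{ψ(a) : ψ a positive linear functional on A with ψ ≤ τ₀ on A₊} is also ε-invariant for δ-unitaries in A₀: for every ε ∈ (0,1) there is δ > 0 such that (1−ε)τ(a) ≤ τ(UaU*) ≤ (1+ε)τ(a) for every δ-unitary U ∈ A₀ and every a ∈ A₊. -/

import Mathlib

open scoped ENNReal

variable {A : Type*} [CStarAlgebra A] [PartialOrder A] [StarOrderedRing A]

/-- A weight on a C*-algebra: `τ(λa + b) = λ τ(a) + τ(b)` for `λ > 0` and positive `a, b`. -/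
def IsWeight (τ : A → ℝ≥0∞) : Prop :=
  ∀ (c : ℝ), 0 < c → ∀ a b : A, 0 ≤ a → 0 ≤ b →
    τ ((c : ℂ) • a + b) = ENNReal.ofReal c * τ a + τ b

/-- A positive linear functional: it takes nonnegative real values on positive elements. -/
def IsPosFunctional (ψ : A →ₗ[ℂ] ℂ) : Prop :=
  ∀ a : A, 0 ≤ a → ∃ r : ℝ, 0 ≤ r ∧ ψ a = r

/-- `ψ ≤ τ₀` on the positive cone. -/
def DomBy (ψ : A →ₗ[ℂ] ℂ) (τ₀ : A → ℝ≥0∞) : Prop :=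
  ∀ a : A, 0 ≤ a → ENNReal.ofReal (ψ a).re ≤ τ₀ a

/-- The semicontinuous regularization `τ(a) = sup {ψ(a) : ψ positive linear functional, ψ ≤ τ₀}`. -/
noncomputable def reg (τ₀ : A → ℝ≥0∞) (a : A) : ℝ≥0∞ :=
  ⨆ (ψ : A →ₗ[ℂ] ℂ) (_ : IsPosFunctional ψ ∧ DomBy ψ τ₀), ENNReal.ofReal (ψ a).re

/-- A `δ`-unitary: `‖U*U − 1‖ < δ` and `‖UU* − 1‖ < δ`. -/
def IsDeltaUnitary (δ : ℝ) (U : A) : Prop :=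
  ‖star U * U - 1‖ < δ ∧ ‖U * star U - 1‖ < δ

/-- `τ` is ε-invariant for δ-unitaries in the dense *-subalgebra `A₀`. -/
def EpsInvariant (A₀ : StarSubalgebra ℂ A) (τ : A → ℝ≥0∞) : Prop :=
  ∀ ε : ℝ, 0 < ε → ε < 1 → ∃ δ : ℝ, 0 < δ ∧ ∀ U ∈ A₀, IsDeltaUnitary δ U →
    ∀ a : A, 0 ≤ a →
      ENNReal.ofReal (1 - ε) * τ a ≤ τ (U * a * star U) ∧
      τ (U * a * star U) ≤ ENNReal.ofReal (1 + ε) * τ a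

namespace MyAux

lemma re_nonneg {ψ : A →ₗ[ℂ] ℂ} (h : IsPosFunctional ψ) {a : A} (ha : 0 ≤ a) :
    0 ≤ (ψ a).re := by
  obtain ⟨r, hr, he⟩ := h a ha
  rw [he]; simpa using hr

lemma im_zero {ψ : A →ₗ[ℂ] ℂ} (h : IsPosFunctional ψ) {a : A} (ha : 0 ≤ a) :
    (ψ a).im = 0 := by
  obtain ⟨r, hr, he⟩ := h a ha
  rw [he]; simp

lemma re_eq {ψ : A →ₗ[ℂ] ℂ} (h : IsPosFunctional ψ) {a : A} (ha : 0 ≤ a) :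
    ψ a = ((ψ a).re : ℂ) := by
  obtain ⟨r, hr, he⟩ := h a ha
  rw [he]; simp

lemma mono {ψ : A →ₗ[ℂ] ℂ} (h : IsPosFunctional ψ) {a b : A} (hab : a ≤ b) :
    (ψ a).re ≤ (ψ b).re := by
  have h0 : 0 ≤ b - a := sub_nonneg.2 hab
  have := re_nonneg h h0
  rw [map_sub] at this
  simp only [Complex.sub_re] at this
  linarith

lemma map_star {ψ : A →ₗ[ℂ] ℂ} (h : IsPosFunctional ψ) (z : A) :
    ψ (star z) = (starRingEnd ℂ) (ψ z) := by
  have key : ∀ c : ℂ, (ψ 1 + c * ψ z + (starRingEnd ℂ c) * ψ (star z)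
      + ((starRingEnd ℂ c) * c) * ψ (star z * z)).im = 0 := by
    intro c
    have hprod : star (1 + c • z) * (1 + c • z)
        = 1 + c • z + (starRingEnd ℂ c) • star z
          + ((starRingEnd ℂ c) * c) • (star z * z) := by
      rw [star_add, star_one, star_smul]
      simp only [add_mul, mul_add, one_mul, mul_one, smul_mul_smul_comm, smul_mul_assoc,
        mul_smul_comm, smul_add, smul_smul, Complex.star_def, mul_comm c ((starRingEnd ℂ) c)]
      abel
    have himz : (ψ (star (1 + c • z) * (1 + c • z))).im = 0 :=
      im_zero h (star_mul_self_nonneg _)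
    rw [hprod] at himz
    simpa [map_add, map_smul, map_one] using himz
  have h1 := key 1
  have hI := key Complex.I
  have him1 : (ψ 1).im = 0 := im_zero h zero_le_one
  have himzz : (ψ (star z * z)).im = 0 := im_zero h (star_mul_self_nonneg z)
  simp only [map_one, one_mul, Complex.add_im, Complex.mul_im, Complex.conj_re, Complex.conj_im,
    Complex.I_re, Complex.I_im, Complex.conj_I, Complex.neg_re, Complex.neg_im,
    Complex.mul_re, Complex.mul_im] at h1 hI
  apply Complex.ext
  · simp only [Complex.conj_re]
    nlinarith [hI, him1, himzz]
  · simp only [Complex.conj_im]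
    nlinarith [h1, him1, himzz]


lemma norm_bound {ψ : A →ₗ[ℂ] ℂ} (h : IsPosFunctional ψ) (z : A) :
    ‖ψ z‖ ≤ (ψ 1).re * ‖z‖ := by
  have hp : 0 ≤ (ψ 1).re := re_nonneg h zero_le_one
  set p : ℝ := (ψ 1).re with hpdef
  set q : ℝ := (ψ (star z * z)).re with hqdef
  have hq0 : 0 ≤ q := re_nonneg h (star_mul_self_nonneg z)
  -- q ≤ p * ‖z‖ ^ 2
  have hqle : q ≤ p * (‖z‖ * ‖z‖) := by
    have h1 : star z * z ≤ algebraMap ℝ A (‖z‖ ^ 2) :=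
      CStarAlgebra.star_mul_le_algebraMap_norm_sq
    have h2 := mono h h1
    have h3 : ψ (algebraMap ℝ A (‖z‖ ^ 2)) = ((‖z‖ ^ 2 : ℝ) : ℂ) * ψ 1 := by
      rw [IsScalarTower.algebraMap_apply ℝ ℂ A, Algebra.algebraMap_eq_smul_one, map_smul]
      simp [smul_eq_mul]
    rw [h3] at h2
    rw [Complex.re_ofReal_mul] at h2
    calc q ≤ ‖z‖ ^ 2 * p := h2
    _ = p * (‖z‖ * ‖z‖) := by ring
  by_cases hw : ψ z = 0
  · rw [hw]
    simpa using mul_nonneg hp (norm_nonneg z)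
  set w : ℂ := ψ z with hwdef
  set m : ℝ := ‖w‖ with hmdef
  have hm0 : 0 < m := by simpa [hmdef] using hw
  set c : ℂ := (starRingEnd ℂ) w / (m : ℂ) with hcdef
  have hmne : (m : ℂ) ≠ 0 := by exact_mod_cast hm0.ne'
  have hcw : c * w = (m : ℂ) := by
    rw [hcdef, div_mul_eq_mul_div]
    rw [← Complex.normSq_eq_conj_mul_self, ← Complex.sq_norm, ← hmdef]
    push_cast
    field_simp
  have hccw : (starRingEnd ℂ) c * (starRingEnd ℂ) w = (m : ℂ) := by
    rw [← map_mul]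
    rw [hcw]
    simp
  have hcc : (starRingEnd ℂ) c * c = 1 := by
    have h1 : Complex.normSq c = 1 := by
      rw [hcdef, Complex.normSq_div, Complex.normSq_conj, Complex.normSq_ofReal,
        ← Complex.sq_norm, ← hmdef]
      field_simp
    rw [← Complex.normSq_eq_conj_mul_self, h1]
    norm_num
  -- the quadratic inequality
  have hquad : ∀ t : ℝ, 0 ≤ p * (t * t) + (2 * m) * t + q := by
    intro t
    set v : A := (t : ℂ) • 1 + c • z with hvdef
    have hprod : star v * v = ((t : ℂ) * t) • (1 : A) + (c * (t : ℂ)) • z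
        + ((t : ℂ) * (starRingEnd ℂ c)) • star z + (c * (starRingEnd ℂ c)) • (star z * z) := by
      rw [hvdef, star_add, star_smul, star_smul, star_one]
      have hstart : star ((t : ℂ)) = (t : ℂ) := by simp [Complex.star_def]
      rw [hstart, Complex.star_def]
      simp only [add_mul, mul_add, one_mul, mul_one, smul_mul_smul_comm, smul_mul_assoc,
        mul_smul_comm, smul_add, smul_smul]
      abel
    have hval := h _ (star_mul_self_nonneg v)
    obtain ⟨r, hr0, hre⟩ := hval
    have hcc' : c * (starRingEnd ℂ c) = 1 := by rw [mul_comm]; exact hcc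
    have hexp : ψ (star v * v) = ((t : ℂ) * t) * ψ 1 + (c * (t : ℂ)) * w
        + ((t : ℂ) * (starRingEnd ℂ c)) * ψ (star z) + (c * (starRingEnd ℂ c)) * ψ (star z * z) := by
      rw [hprod]
      simp only [map_add, map_smul, smul_eq_mul]
      rfl
    rw [map_star h z, hcc', one_mul] at hexp
    have hre2 : (ψ (star v * v)).re = t * t * p + 2 * m * t + q := by
      rw [hexp]
      have e1 : (c * (t : ℂ)) * w = (t : ℂ) * (m : ℂ) := by
        rw [mul_comm c ((t:ℂ)), mul_assoc, hcw]
      have e2 : ((t : ℂ) * (starRingEnd ℂ c)) * (starRingEnd ℂ) w = (t : ℂ) * (m : ℂ) := by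
        rw [mul_assoc, hccw]
      rw [e1, e2]
      have him1 : (ψ 1).im = 0 := im_zero h zero_le_one
      have himq : (ψ (star z * z)).im = 0 := im_zero h (star_mul_self_nonneg z)
      simp only [Complex.add_re, Complex.mul_re, Complex.ofReal_re, Complex.ofReal_im,
        Complex.mul_im]
      rw [him1, hpdef, hqdef]
      push_cast
      ring
    rw [hre, Complex.ofReal_re] at hre2
    nlinarith [hr0, hre2]
  have hdisc := discrim_le_zero hquad
  rw [discrim] at hdisc
  have hm2 : m ^ 2 ≤ p * q := by nlinarith [hdisc]
  have : m ≤ p * ‖z‖ := by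
    nlinarith [hm2, mul_le_mul_of_nonneg_left hqle hp, hm0, mul_nonneg hp (norm_nonneg z)]
  simpa [hmdef, hwdef] using this

end MyAux

namespace MyAux

/-- Conjugation by a fixed element as a linear map. -/
def conjMap (W : A) : A →ₗ[ℂ] A where
  toFun x := W * x * star W
  map_add' x y := by simp [mul_add, add_mul]
  map_smul' c x := by simp [mul_smul_comm, smul_mul_assoc]

@[simp] lemma conjMap_apply (W x : A) : conjMap W x = W * x * star W := rfl

lemma norm_one_le : ‖(1 : A)‖ ≤ 1 := by
  have h : ‖(1 : A)‖ = ‖(1 : A)‖ * ‖(1 : A)‖ := by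
    simpa using CStarRing.norm_star_mul_self (x := (1 : A))
  nlinarith [norm_nonneg (1 : A)]

lemma unit_inv_norm_le {u : Aˣ} (h : ‖1 - (↑u : A)‖ ≤ 1 / 2) : ‖(↑u⁻¹ : A)‖ ≤ 2 := by
  have h2 : (↑u⁻¹ : A) - 1 = ↑u⁻¹ * (1 - ↑u) := by
    rw [mul_sub, mul_one, Units.inv_mul]
  have h3 : ‖(↑u⁻¹ : A)‖ - ‖(1 : A)‖ ≤ ‖(↑u⁻¹ : A) - 1‖ := norm_sub_norm_le _ _
  rw [h2] at h3
  have h4 : ‖(↑u⁻¹ : A) * (1 - ↑u)‖ ≤ ‖(↑u⁻¹ : A)‖ * ‖1 - (↑u : A)‖ := norm_mul_le _ _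
  nlinarith [norm_one_le (A := A), norm_nonneg (↑u⁻¹ : A), norm_nonneg (1 - (↑u : A))]

end MyAux

/-- From a dominated positive functional `ψ` and an element `W` whose conjugation
expands `τ₀` by at most `1 + ε`, we get a dominated positive functional which is
`(1+ε)⁻¹ ψ (W ⬝ W*)`. -/
lemma conj_dom {τ₀ : A → ℝ≥0∞} {ε : ℝ} (hε : 0 < ε) {ψ : A →ₗ[ℂ] ℂ}
    (hψ : IsPosFunctional ψ) (hdom : DomBy ψ τ₀) {W : A}
    (hτ : ∀ b : A, 0 ≤ b → τ₀ (W * b * star W) ≤ ENNReal.ofReal (1 + ε) * τ₀ b) :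
    ∃ φ : A →ₗ[ℂ] ℂ, (IsPosFunctional φ ∧ DomBy φ τ₀) ∧
      ∀ x : A, φ x = (((1 + ε)⁻¹ : ℝ) : ℂ) * ψ (W * x * star W) := by
  refine ⟨((((1 + ε)⁻¹ : ℝ)) : ℂ) • (ψ.comp (MyAux.conjMap W)), ⟨?_, ?_⟩, fun x => by
    simp [MyAux.conjMap, LinearMap.smul_apply, LinearMap.comp_apply, smul_eq_mul]⟩
  · intro b hb
    obtain ⟨r, hr0, hre⟩ := hψ _ (star_right_conjugate_nonneg hb W)
    refine ⟨(1 + ε)⁻¹ * r, by positivity, ?_⟩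
    simp only [LinearMap.smul_apply, LinearMap.comp_apply, MyAux.conjMap_apply, smul_eq_mul]
    rw [hre]
    push_cast
    ring
  · intro b hb
    have hb' : 0 ≤ W * b * star W := star_right_conjugate_nonneg hb W
    have h1 : ((((((1 + ε)⁻¹ : ℝ)) : ℂ) • (ψ.comp (MyAux.conjMap W))) b).re
        = (1 + ε)⁻¹ * (ψ (W * b * star W)).re := by
      simp only [LinearMap.smul_apply, LinearMap.comp_apply, MyAux.conjMap_apply, smul_eq_mul]
      exact Complex.re_ofReal_mul _ _
    rw [h1, ENNReal.ofReal_mul (by positivity)]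
    calc ENNReal.ofReal (1 + ε)⁻¹ * ENNReal.ofReal ((ψ (W * b * star W)).re)
        ≤ ENNReal.ofReal (1 + ε)⁻¹ * (ENNReal.ofReal (1 + ε) * τ₀ b) :=
          mul_le_mul_right ((hdom _ hb').trans (hτ b hb)) _
      _ = (ENNReal.ofReal (1 + ε)⁻¹ * ENNReal.ofReal (1 + ε)) * τ₀ b := (mul_assoc _ _ _).symm
      _ = ENNReal.ofReal ((1 + ε)⁻¹ * (1 + ε)) * τ₀ b := by
          rw [ENNReal.ofReal_mul (by positivity)]
      _ = τ₀ b := by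
          rw [inv_mul_cancel₀ (by positivity : (1 : ℝ) + ε ≠ 0)]
          simp


set_option maxHeartbeats 1000000 in
/-- Proposition 3.3.3: the semicontinuous regularization of a weight which is ε-invariant
for δ-unitaries in a dense *-subalgebra is again ε-invariant for δ-unitaries. -/
theorem stmt5 (A₀ : StarSubalgebra ℂ A) (hdense : Dense (A₀ : Set A))
    (τ₀ : A → ℝ≥0∞) (hτ₀ : IsWeight τ₀) (hinv : EpsInvariant A₀ τ₀) :
    EpsInvariant A₀ (reg τ₀) := by
  intro ε hε0 hε1
  obtain ⟨δ₀, hδ₀, hprop⟩ := hinv ε hε0 hε1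
  obtain ⟨δ₁, hδ₁def⟩ : ∃ x : ℝ, x = min δ₀ 1 := ⟨_, rfl⟩
  have hδ₁0 : 0 < δ₁ := hδ₁def ▸ lt_min hδ₀ one_pos
  have hδ₁1 : δ₁ ≤ 1 := hδ₁def ▸ min_le_right _ _
  have hδ₁δ₀ : δ₁ ≤ δ₀ := hδ₁def ▸ min_le_left _ _
  refine ⟨δ₁ / 16, by positivity, ?_⟩
  intro U hU hUδ a ha
  have hUδ₀ : IsDeltaUnitary δ₀ U :=
    ⟨hUδ.1.trans_le (by linarith), hUδ.2.trans_le (by linarith)⟩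
  refine ⟨?_, ?_⟩
  · -- lower bound
    simp only [reg, ENNReal.mul_iSup]
    refine iSup₂_le fun ψ hψ => ?_
    have hr0 : 0 ≤ (ψ a).re := MyAux.re_nonneg hψ.1 ha
    rcases eq_or_lt_of_le hr0 with hr | hr
    · rw [← hr]; simp
    obtain ⟨r, hrdef⟩ : ∃ x : ℝ, x = (ψ a).re := ⟨_, rfl⟩
    rw [← hrdef] at hr0 hr
    -- U is invertible
    have h1 : ‖1 - star U * U‖ < 1 := by
      rw [norm_sub_rev]; exact hUδ.1.trans_le (by linarith)
    have h1' : ‖1 - U * star U‖ < 1 := by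
      rw [norm_sub_rev]; exact hUδ.2.trans_le (by linarith)
    have hsu : IsUnit (star U * U) := by
      simpa using isUnit_one_sub_of_norm_lt_one h1
    have hst : IsUnit (U * star U) := by
      simpa using isUnit_one_sub_of_norm_lt_one h1'
    obtain ⟨u, hu⟩ := hsu
    obtain ⟨t, ht⟩ := hst
    have hu1 : ‖1 - (↑u : A)‖ ≤ 1 / 2 := by
      rw [hu, norm_sub_rev]; exact hUδ.1.le.trans (by linarith)
    have ht1 : ‖1 - (↑t : A)‖ ≤ 1 / 2 := by
      rw [ht, norm_sub_rev]; exact hUδ.2.le.trans (by linarith)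
    have hui : ‖(↑u⁻¹ : A)‖ ≤ 2 := MyAux.unit_inv_norm_le hu1
    have hti : ‖(↑t⁻¹ : A)‖ ≤ 2 := MyAux.unit_inv_norm_le ht1
    obtain ⟨V, hVdef⟩ : ∃ x : A, x = (↑u⁻¹ : A) * star U := ⟨_, rfl⟩
    have hVU : V * U = 1 := by rw [hVdef, mul_assoc, ← hu, Units.inv_mul]
    have hUR : U * (star U * (↑t⁻¹ : A)) = 1 := by rw [← mul_assoc, ← ht, Units.mul_inv]
    have hVR : V = star U * (↑t⁻¹ : A) := by
      calc V = V * (U * (star U * (↑t⁻¹ : A))) := by rw [hUR, mul_one]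
        _ = (V * U) * (star U * (↑t⁻¹ : A)) := (mul_assoc V U _).symm
        _ = star U * (↑t⁻¹ : A) := by rw [hVU, one_mul]
    have hUV : U * V = 1 := by rw [hVR]; exact hUR
    have hstar1 : star U * star V = 1 := by rw [← star_mul, hVU, star_one]
    have hstar2 : star V * star U = 1 := by rw [← star_mul, hUV, star_one]
    have hsVV : star V * V = (↑t⁻¹ : A) := by
      symm
      apply Units.inv_eq_of_mul_eq_one_right
      rw [ht]
      have e : (U * star U) * (star V * V) = U * ((star U * star V) * V) := by
        noncomm_ring
      rw [e, hstar1, one_mul, hUV]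
    have hVsV : V * star V = (↑u⁻¹ : A) := by
      symm
      apply Units.inv_eq_of_mul_eq_one_right
      rw [hu]
      have e : (star U * U) * (V * star V) = star U * ((U * V) * star V) := by
        noncomm_ring
      rw [e, hUV, one_mul, hstar1]
    -- norm estimates for V
    have hU2 : ‖U‖ ≤ 2 := by
      have hn : ‖star U * U‖ = ‖U‖ * ‖U‖ := CStarRing.norm_star_mul_self
      have h3 : ‖star U * U‖ - ‖(1 : A)‖ ≤ ‖star U * U - 1‖ := norm_sub_norm_le _ _
      nlinarith [MyAux.norm_one_le (A := A), hUδ.1.le, norm_nonneg U, hδ₁1, hδ₁0]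
    have hV4 : ‖V‖ ≤ 4 := by
      rw [hVdef]
      calc ‖(↑u⁻¹ : A) * star U‖ ≤ ‖(↑u⁻¹ : A)‖ * ‖star U‖ := norm_mul_le _ _
        _ = ‖(↑u⁻¹ : A)‖ * ‖U‖ := by rw [norm_star]
        _ ≤ 2 * 2 := mul_le_mul hui hU2 (norm_nonneg _) (by norm_num)
        _ = 4 := by norm_num
    have hsVV1 : ‖star V * V - 1‖ ≤ δ₁ / 8 := by
      rw [hsVV]
      have h2 : (↑t⁻¹ : A) - 1 = ↑t⁻¹ * (1 - ↑t) := by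
        rw [mul_sub, mul_one, Units.inv_mul]
      rw [h2]
      have h4 := norm_mul_le (↑t⁻¹ : A) (1 - (↑t : A))
      have h5 : ‖1 - (↑t : A)‖ ≤ δ₁ / 16 := by
        rw [ht, norm_sub_rev]; exact hUδ.2.le
      nlinarith [norm_nonneg (↑t⁻¹ : A), norm_nonneg (1 - (↑t : A))]
    have hVsV1 : ‖V * star V - 1‖ ≤ δ₁ / 8 := by
      rw [hVsV]
      have h2 : (↑u⁻¹ : A) - 1 = ↑u⁻¹ * (1 - ↑u) := by
        rw [mul_sub, mul_one, Units.inv_mul]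
      rw [h2]
      have h4 := norm_mul_le (↑u⁻¹ : A) (1 - (↑u : A))
      have h5 : ‖1 - (↑u : A)‖ ≤ δ₁ / 16 := by
        rw [hu, norm_sub_rev]; exact hUδ.1.le
      nlinarith [norm_nonneg (↑u⁻¹ : A), norm_nonneg (1 - (↑u : A))]
    -- pick W in A₀ close to V
    obtain ⟨M, hMdef⟩ : ∃ x : ℝ, x = (ψ 1).re := ⟨_, rfl⟩
    have hM0 : 0 ≤ M := hMdef ▸ MyAux.re_nonneg hψ.1 zero_le_one
    obtain ⟨η, hηdef⟩ : ∃ x : ℝ, x = min (δ₁ / 16) (ε ^ 2 * r / (8 * M * (‖a‖ + 1) + 1)) :=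
      ⟨_, rfl⟩
    have hη0 : 0 < η := by
      rw [hηdef]
      apply lt_min (by positivity) (by positivity)
    have hη1 : η ≤ δ₁ / 16 := hηdef ▸ min_le_left _ _
    have hη2 : η ≤ ε ^ 2 * r / (8 * M * (‖a‖ + 1) + 1) := hηdef ▸ min_le_right _ _
    have hη3 : η ≤ 1 := by linarith
    obtain ⟨W, hWA, hWd⟩ := hdense.exists_dist_lt V hη0
    rw [SetLike.mem_coe] at hWA
    have hWV : ‖W - V‖ ≤ η := by
      rw [norm_sub_rev, ← dist_eq_norm]; exact hWd.le
    have hW5 : ‖W‖ ≤ 5 := by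
      have := norm_sub_norm_le W V
      linarith
    -- W is a δ₀-unitary
    have hWdel : IsDeltaUnitary δ₀ W := by
      constructor
      · have e : star W * W - 1
            = (star W * (W - V) + star (W - V) * V) + (star V * V - 1) := by
          simp only [star_sub]
          noncomm_ring
        have n1 : ‖star W * (W - V)‖ ≤ 5 * η := by
          calc ‖star W * (W - V)‖ ≤ ‖star W‖ * ‖W - V‖ := norm_mul_le _ _
            _ = ‖W‖ * ‖W - V‖ := by rw [norm_star]
            _ ≤ 5 * η := mul_le_mul hW5 hWV (norm_nonneg _) (by norm_num)
        have n2 : ‖star (W - V) * V‖ ≤ 4 * η := by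
          calc ‖star (W - V) * V‖ ≤ ‖star (W - V)‖ * ‖V‖ := norm_mul_le _ _
            _ = ‖W - V‖ * ‖V‖ := by rw [norm_star]
            _ ≤ η * 4 := mul_le_mul hWV hV4 (norm_nonneg _) hη0.le
            _ = 4 * η := by ring
        calc ‖star W * W - 1‖
            ≤ ‖star W * (W - V) + star (W - V) * V‖ + ‖star V * V - 1‖ := by
              rw [e]; exact norm_add_le _ _
          _ ≤ (‖star W * (W - V)‖ + ‖star (W - V) * V‖) + ‖star V * V - 1‖ := by
              have := norm_add_le (star W * (W - V)) (star (W - V) * V)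
              linarith
          _ < δ₀ := by linarith
      · have e : W * star W - 1
            = ((W - V) * star W + V * star (W - V)) + (V * star V - 1) := by
          simp only [star_sub]
          noncomm_ring
        have n1 : ‖(W - V) * star W‖ ≤ 5 * η := by
          calc ‖(W - V) * star W‖ ≤ ‖W - V‖ * ‖star W‖ := norm_mul_le _ _
            _ = ‖W - V‖ * ‖W‖ := by rw [norm_star]
            _ ≤ η * 5 := mul_le_mul hWV hW5 (norm_nonneg _) hη0.le
            _ = 5 * η := by ring
        have n2 : ‖V * star (W - V)‖ ≤ 4 * η := by
          calc ‖V * star (W - V)‖ ≤ ‖V‖ * ‖star (W - V)‖ := norm_mul_le _ _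
            _ = ‖V‖ * ‖W - V‖ := by rw [norm_star]
            _ ≤ 4 * η := mul_le_mul hV4 hWV (norm_nonneg _) (by norm_num)
        calc ‖W * star W - 1‖
            ≤ ‖(W - V) * star W + V * star (W - V)‖ + ‖V * star V - 1‖ := by
              rw [e]; exact norm_add_le _ _
          _ ≤ (‖(W - V) * star W‖ + ‖V * star (W - V)‖) + ‖V * star V - 1‖ := by
              have := norm_add_le ((W - V) * star W) (V * star (W - V))
              linarith
          _ < δ₀ := by linarith
    -- the conjugated functional
    obtain ⟨φ, hφ, heval⟩ := conj_dom hε0 hψ.1 hψ.2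
      (W := W) (fun b hb => (hprop W hWA hWdel b hb).2)
    -- the perturbation estimate
    have hB1 : ‖W * U - 1‖ ≤ 2 * η := by
      have e : W * U - 1 = (W - V) * U := by rw [sub_mul, hVU]
      rw [e]
      calc ‖(W - V) * U‖ ≤ ‖W - V‖ * ‖U‖ := norm_mul_le _ _
        _ ≤ η * 2 := mul_le_mul hWV hU2 (norm_nonneg _) hη0.le
        _ = 2 * η := by ring
    have hB2 : ‖W * U‖ ≤ 2 := by
      have := norm_sub_norm_le (W * U) 1
      have h1 := MyAux.norm_one_le (A := A)
      linarith
    have hx : W * (U * a * star U) * star W = (W * U) * a * star (W * U) := by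
      rw [star_mul]
      noncomm_ring
    have hxa : (W * U) * a * star (W * U) - a
        = ((W * U) - 1) * (a * star (W * U)) + a * (star (W * U) - 1) := by
      noncomm_ring
    have hdiff : ‖(W * U) * a * star (W * U) - a‖ ≤ 6 * η * ‖a‖ := by
      rw [hxa]
      have i2 : ‖a * star (W * U)‖ ≤ ‖a‖ * 2 := by
        calc ‖a * star (W * U)‖ ≤ ‖a‖ * ‖star (W * U)‖ := norm_mul_le _ _
          _ = ‖a‖ * ‖W * U‖ := by rw [norm_star]
          _ ≤ ‖a‖ * 2 := mul_le_mul_of_nonneg_left hB2 (norm_nonneg a)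
      have n1 : ‖((W * U) - 1) * (a * star (W * U))‖ ≤ 2 * η * (‖a‖ * 2) := by
        calc ‖((W * U) - 1) * (a * star (W * U))‖
            ≤ ‖(W * U) - 1‖ * ‖a * star (W * U)‖ := norm_mul_le _ _
          _ ≤ 2 * η * (‖a‖ * 2) := mul_le_mul hB1 i2 (norm_nonneg _) (by positivity)
      have n2 : ‖a * (star (W * U) - 1)‖ ≤ ‖a‖ * (2 * η) := by
        have i3 : ‖star (W * U) - 1‖ ≤ 2 * η := by
          rw [← star_one, ← star_sub, norm_star]
          exact hB1
        calc ‖a * (star (W * U) - 1)‖ ≤ ‖a‖ * ‖star (W * U) - 1‖ := norm_mul_le _ _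
          _ ≤ ‖a‖ * (2 * η) := mul_le_mul_of_nonneg_left i3 (norm_nonneg a)
      have htot := norm_add_le (((W * U) - 1) * (a * star (W * U))) (a * (star (W * U) - 1))
      nlinarith [norm_nonneg a]
    -- ψ-estimate
    have habs : ‖ψ ((W * U) * a * star (W * U) - a)‖ ≤ M * (6 * η * ‖a‖) := by
      calc ‖ψ ((W * U) * a * star (W * U) - a)‖
          ≤ M * ‖(W * U) * a * star (W * U) - a‖ := by
            rw [hMdef]; exact MyAux.norm_bound hψ.1 _
        _ ≤ M * (6 * η * ‖a‖) := by
            apply mul_le_mul_of_nonneg_left hdiff hM0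
    have hsmall : M * (6 * η * ‖a‖) ≤ ε ^ 2 * r := by
      have hD : (0 : ℝ) < 8 * M * (‖a‖ + 1) + 1 := by positivity
      have s1 : M * (6 * η * ‖a‖) ≤ M * (6 * (ε ^ 2 * r / (8 * M * (‖a‖ + 1) + 1)) * ‖a‖) := by
        apply mul_le_mul_of_nonneg_left _ hM0
        apply mul_le_mul_of_nonneg_right _ (norm_nonneg a)
        linarith
      have s2 : M * (6 * (ε ^ 2 * r / (8 * M * (‖a‖ + 1) + 1)) * ‖a‖) ≤ ε ^ 2 * r := by
        have e : M * (6 * (ε ^ 2 * r / (8 * M * (‖a‖ + 1) + 1)) * ‖a‖)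
            = (6 * M * ‖a‖) * (ε ^ 2 * r) / (8 * M * (‖a‖ + 1) + 1) := by
          ring
        rw [e, div_le_iff₀ hD]
        have hX : (0 : ℝ) ≤ ε ^ 2 * r := by positivity
        nlinarith [mul_nonneg hX (by positivity : (0:ℝ) ≤ 2 * M * ‖a‖ + 8 * M + 1)]
      linarith
    have hre_x : (1 - ε ^ 2) * r ≤ (ψ ((W * U) * a * star (W * U))).re := by
      have hmap : ψ ((W * U) * a * star (W * U)) - ψ a
          = ψ ((W * U) * a * star (W * U) - a) := (map_sub ψ _ _).symm
      have h6 : |(ψ ((W * U) * a * star (W * U))).re - r| ≤ ε ^ 2 * r := by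
        have h7 : (ψ ((W * U) * a * star (W * U))).re - r
            = (ψ ((W * U) * a * star (W * U) - a)).re := by
          rw [← hmap, Complex.sub_re, hrdef]
        rw [h7]
        exact (Complex.abs_re_le_norm _).trans (habs.trans hsmall)
      have := abs_le.1 h6
      nlinarith [this.1, hr.le]
    -- conclude
    have hφre : (φ (U * a * star U)).re
        = (1 + ε)⁻¹ * (ψ ((W * U) * a * star (W * U))).re := by
      rw [heval, hx]
      exact Complex.re_ofReal_mul _ _
    have hreal : (1 - ε) * r ≤ (φ (U * a * star U)).re := by
      rw [hφre]
      have e : (1 - ε) * r = (1 + ε)⁻¹ * ((1 - ε ^ 2) * r) := by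
        field_simp
        ring
      rw [e]
      apply mul_le_mul_of_nonneg_left hre_x (by positivity)
    rw [← ENNReal.ofReal_mul (by linarith : (0 : ℝ) ≤ 1 - ε), ← hrdef]
    refine le_trans (ENNReal.ofReal_le_ofReal hreal) ?_
    exact le_iSup₂ (f := fun (ψ' : A →ₗ[ℂ] ℂ) (_ : IsPosFunctional ψ' ∧ DomBy ψ' τ₀) =>
      ENNReal.ofReal ((ψ' (U * a * star U)).re)) φ hφ
  · -- upper bound
    simp only [reg]
    refine iSup₂_le fun ψ hψ => ?_
    obtain ⟨φ, hφ, heval⟩ := conj_dom hε0 hψ.1 hψ.2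
      (W := U) (fun b hb => (hprop U hU hUδ₀ b hb).2)
    have hφre : (φ a).re = (1 + ε)⁻¹ * (ψ (U * a * star U)).re := by
      rw [heval]
      exact Complex.re_ofReal_mul _ _
    have key : ENNReal.ofReal ((ψ (U * a * star U)).re)
        = ENNReal.ofReal (1 + ε) * ENNReal.ofReal ((φ a).re) := by
      rw [hφre, ← ENNReal.ofReal_mul (by positivity)]
      congr 1
      field_simp
    rw [key]
    refine mul_le_mul_right ?_ _
    exact le_iSup₂ (f := fun (ψ' : A →ₗ[ℂ] ℂ) (_ : IsPosFunctional ψ' ∧ DomBy ψ' τ₀) =>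
      ENNReal.ofReal ((ψ' a).re)) φ hφ
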